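/- With bitvectors as defined for internal nodes of a full binary tree with L leaves and L−1 internal nodes, the L × (L−1) bitvector matrix B (whose columns are the internal-node bitvectors) has full column rank over the rationals (equivalently, over the reals). -/
import Mathlib


/-- Full binary tree: every node is a leaf or has exactly two children. -/
inductive BTree : Type
  | leaf : BTree
  | node (l r : BTree) : BTree

namespace BTree

/-- Number of leaves. -/
def numLeaves : BTree → ℕ
  | leaf => 1
  | node l r => numLeaves l + numLeaves r

/-- Number of internal (non-leaf) nodes. -/
def internals : BTree → ℕ
  | leaf => 0
  | node l r => internals l + internals r + 1

/-- Total number of nodes. -/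
def size : BTree → ℕ
  | leaf => 1
  | node l r => 1 + size l + size r

/-- Depth, with the depth of a single leaf being 1. -/
def depth : BTree → ℕ
  | leaf => 1
  | node l r => 1 + max (depth l) (depth r)

/-- The subtree at a path (`false` = go left, `true` = go right), if it exists. -/
def subtreeAt? : BTree → List Bool → Option BTree
  | t, [] => some t
  | leaf, _ :: _ => none
  | node l r, b :: p => if b then subtreeAt? r p else subtreeAt? l p

/-- Number of leaves strictly to the left of the subtree at the given path. -/
def offsetAt : BTree → List Bool → ℕ
  | _, [] => 0
  | leaf, _ :: _ => 0
  | node l r, b :: p => if b then l.numLeaves + offsetAt r p else offsetAt l p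

/-- A path denotes an internal node iff the subtree there is a `node`. -/
def isInternal (t : BTree) (p : List Bool) : Prop :=
  ∃ l r, t.subtreeAt? p = some (node l r)

/-- The set of (left-to-right) indices of the leaves of a tree whose leftmost
leaf has global index `off`. -/
def leafIdxSet : BTree → ℕ → Finset ℕ
  | leaf, off => {off}
  | node l r, off => leafIdxSet l off ∪ leafIdxSet r (off + l.numLeaves)

/-- The set of leaf indices of the left subtree of the internal node at path `p`,
i.e. the zero positions of its bitvector. -/
def zeroSet (t : BTree) (p : List Bool) : Finset ℕ :=
  match t.subtreeAt? p with
  | some (node l _) => leafIdxSet l (t.offsetAt p)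
  | _ => ∅

/-- The bitvector of the internal node at path `p`: 0 exactly at the positions of
the leaves of its left subtree, 1 elsewhere. -/
def bitvec (t : BTree) (p : List Bool) (i : ℕ) : ℤ :=
  if i ∈ t.zeroSet p then 0 else 1

/-- The set of leaf indices of the whole subtree rooted at path `p`. -/
def subtreeLeafSet (t : BTree) (p : List Bool) : Finset ℕ :=
  match t.subtreeAt? p with
  | some s => leafIdxSet s (t.offsetAt p)
  | none => ∅

-- auxiliary lemmas
lemma one_le_numLeaves (t : BTree) : 1 ≤ t.numLeaves := by
  induction t with
  | leaf => simp [numLeaves]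
  | node l r ihl ihr => rw [numLeaves]; omega

lemma leafIdxSet_eq_Ico (t : BTree) : ∀ off, t.leafIdxSet off = Finset.Ico off (off + t.numLeaves) := by
  induction t with
  | leaf => intro off; ext i; simp [leafIdxSet, numLeaves]
  | node l r ihl ihr =>
      intro off
      rw [leafIdxSet, ihl, ihr, numLeaves]
      ext i; simp [Finset.mem_Ico]; omega

lemma zeroSet_eq {t : BTree} {p : List Bool} {a b : BTree}
    (h : t.subtreeAt? p = some (node a b)) :
    t.zeroSet p = Finset.Ico (t.offsetAt p) (t.offsetAt p + a.numLeaves) := by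
  unfold zeroSet
  rw [h]
  exact leafIdxSet_eq_Ico a _

lemma subtreeAt?_cons_false (l r : BTree) (p : List Bool) :
    (node l r).subtreeAt? (false :: p) = l.subtreeAt? p := rfl

lemma subtreeAt?_cons_true (l r : BTree) (p : List Bool) :
    (node l r).subtreeAt? (true :: p) = r.subtreeAt? p := rfl

lemma offsetAt_cons_false (l r : BTree) (p : List Bool) :
    (node l r).offsetAt (false :: p) = l.offsetAt p := rfl

lemma offsetAt_cons_true (l r : BTree) (p : List Bool) :
    (node l r).offsetAt (true :: p) = l.numLeaves + r.offsetAt p := rfl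

lemma zeroSet_cons_false (l r : BTree) (p : List Bool) :
    (node l r).zeroSet (false :: p) = l.zeroSet p := rfl

lemma bitvec_cons_false (l r : BTree) (p : List Bool) (i : ℕ) :
    (node l r).bitvec (false :: p) i = l.bitvec p i := rfl

/-- The finite set of paths to internal nodes. -/
def internalPaths : BTree → Finset (List Bool)
  | leaf => ∅
  | node l r => insert []
      ((internalPaths l).image (false :: ·) ∪ (internalPaths r).image (true :: ·))

lemma mem_internalPaths : ∀ (t : BTree) (p : List Bool),
    p ∈ t.internalPaths ↔ t.isInternal p := by
  intro t
  induction t with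
  | leaf =>
      intro p
      simp only [internalPaths, Finset.notMem_empty, false_iff]
      rintro ⟨a, b, h⟩
      cases p with
      | nil => simp [subtreeAt?] at h
      | cons c q => simp [subtreeAt?] at h
  | node l r ihl ihr =>
      intro p
      cases p with
      | nil =>
          simp only [internalPaths, Finset.mem_insert, true_or, eq_self_iff_true, true_iff]
          exact ⟨l, r, rfl⟩
      | cons b q =>
          cases b with
          | false =>
              simp only [internalPaths, Finset.mem_insert, Finset.mem_union, Finset.mem_image]
              constructor
              · rintro (h | ⟨a, ha, heq⟩ | ⟨a, ha, h⟩)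
                · simp at h
                · obtain rfl : a = q := by injection heq
                  obtain ⟨x, y, hx⟩ := (ihl a).mp ha
                  exact ⟨x, y, hx⟩
                · simp at h
              · rintro ⟨x, y, hx⟩
                exact Or.inr (Or.inl ⟨q, (ihl q).mpr ⟨x, y, hx⟩, rfl⟩)
          | true =>
              simp only [internalPaths, Finset.mem_insert, Finset.mem_union, Finset.mem_image]
              constructor
              · rintro (h | ⟨a, ha, h⟩ | ⟨a, ha, heq⟩)
                · simp at h
                · simp at h
                · obtain rfl : a = q := by injection heq
                  obtain ⟨x, y, hx⟩ := (ihr a).mp ha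
                  exact ⟨x, y, hx⟩
              · rintro ⟨x, y, hx⟩
                exact Or.inr (Or.inr ⟨q, (ihr q).mpr ⟨x, y, hx⟩, rfl⟩)

lemma sum_internalPaths (l r : BTree) (f : List Bool → ℚ) :
    ∑ p ∈ (node l r).internalPaths, f p =
      f [] + (∑ p ∈ l.internalPaths, f (false :: p))
           + (∑ q ∈ r.internalPaths, f (true :: q)) := by
  rw [show (node l r).internalPaths = insert []
      ((internalPaths l).image (false :: ·) ∪ (internalPaths r).image (true :: ·)) from rfl]
  rw [Finset.sum_insert, Finset.sum_union, Finset.sum_image, Finset.sum_image]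
  · ring
  · intro a _ b _ h; simpa using h
  · intro a _ b _ h; simpa using h
  · rw [Finset.disjoint_left]
    rintro x hx hx'
    simp only [Finset.mem_image] at hx hx'
    obtain ⟨a, _, rfl⟩ := hx
    obtain ⟨b, _, hb⟩ := hx'
    simp at hb
  · simp

lemma bitvec_nil_lt (l r : BTree) (i : ℕ) (hi : i < l.numLeaves) :
    (node l r).bitvec [] i = 0 := by
  rw [bitvec, zeroSet_eq (show (node l r).subtreeAt? [] = some (node l r) from rfl)]
  have : (node l r).offsetAt [] = 0 := rfl
  rw [this]
  simp [Finset.mem_Ico]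
  omega

lemma bitvec_nil_ge (l r : BTree) (i : ℕ) (hi : l.numLeaves ≤ i) :
    (node l r).bitvec [] i = 1 := by
  rw [bitvec, zeroSet_eq (show (node l r).subtreeAt? [] = some (node l r) from rfl)]
  have : (node l r).offsetAt [] = 0 := rfl
  rw [this]
  simp [Finset.mem_Ico]
  omega

lemma bitvec_cons_true_lt (l r : BTree) {q : List Bool} (hq : r.isInternal q)
    (i : ℕ) (hi : i < l.numLeaves) : (node l r).bitvec (true :: q) i = 1 := by
  obtain ⟨a, b, h⟩ := hq
  have h' : (node l r).subtreeAt? (true :: q) = some (node a b) := h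
  rw [bitvec, zeroSet_eq h', offsetAt_cons_true]
  simp only [Finset.mem_Ico]
  rw [if_neg]
  omega

lemma bitvec_cons_true_shift (l r : BTree) {q : List Bool} (hq : r.isInternal q)
    (j : ℕ) : (node l r).bitvec (true :: q) (l.numLeaves + j) = r.bitvec q j := by
  obtain ⟨a, b, h⟩ := hq
  have h' : (node l r).subtreeAt? (true :: q) = some (node a b) := h
  rw [bitvec, bitvec, zeroSet_eq h', zeroSet_eq h, offsetAt_cons_true]
  simp only [Finset.mem_Ico]
  congr 1
  simp only [eq_iff_iff]
  omega

lemma key (t : BTree) : ∀ (c : List Bool → ℚ) (d : ℚ),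
    (∀ i, i < t.numLeaves →
      (∑ p ∈ t.internalPaths, c p * (t.bitvec p i : ℚ)) + d = 0) →
    d = 0 ∧ ∀ p ∈ t.internalPaths, c p = 0 := by
  induction t with
  | leaf =>
      intro c d h
      have := h 0 (by rw [numLeaves]; omega)
      simp [internalPaths] at this ⊢
      exact this
  | node l r ihl ihr =>
      intro c d h
      have hm1 := one_le_numLeaves l
      have hn1 := one_le_numLeaves r
      have hleft : ∀ i, i < l.numLeaves →
          (∑ p ∈ l.internalPaths, (fun p => c (false :: p)) p * (l.bitvec p i : ℚ))
            + ((∑ q ∈ r.internalPaths, c (true :: q)) + d) = 0 := by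
        intro i hi
        have hh := h i (by rw [numLeaves]; omega)
        rw [sum_internalPaths] at hh
        rw [bitvec_nil_lt l r i hi] at hh
        have e1 : ∑ p ∈ l.internalPaths, c (false :: p) * (((node l r).bitvec (false :: p) i : ℤ) : ℚ)
            = ∑ p ∈ l.internalPaths, c (false :: p) * ((l.bitvec p i : ℤ) : ℚ) := by
          refine Finset.sum_congr rfl fun p _ => ?_
          rw [bitvec_cons_false]
        have e2 : ∑ q ∈ r.internalPaths, c (true :: q) * (((node l r).bitvec (true :: q) i : ℤ) : ℚ)
            = ∑ q ∈ r.internalPaths, c (true :: q) := by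
          refine Finset.sum_congr rfl fun q hq => ?_
          rw [bitvec_cons_true_lt l r ((mem_internalPaths r q).mp hq) i hi]
          simp
        rw [e1, e2] at hh
        push_cast at hh ⊢
        linarith
      obtain ⟨hd1, hcl⟩ := ihl _ _ hleft
      have hright : ∀ j, j < r.numLeaves →
          (∑ q ∈ r.internalPaths, (fun q => c (true :: q)) q * (r.bitvec q j : ℚ))
            + (c [] + d) = 0 := by
        intro j hj
        have hh := h (l.numLeaves + j) (by rw [numLeaves]; omega)
        rw [sum_internalPaths] at hh
        rw [bitvec_nil_ge l r _ (by omega)] at hh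
        have e1 : ∑ p ∈ l.internalPaths, c (false :: p) * (((node l r).bitvec (false :: p) (l.numLeaves + j) : ℤ) : ℚ) = 0 := by
          refine Finset.sum_eq_zero fun p hp => ?_
          rw [hcl p hp, zero_mul]
        have e2 : ∑ q ∈ r.internalPaths, c (true :: q) * (((node l r).bitvec (true :: q) (l.numLeaves + j) : ℤ) : ℚ)
            = ∑ q ∈ r.internalPaths, c (true :: q) * ((r.bitvec q j : ℤ) : ℚ) := by
          refine Finset.sum_congr rfl fun q hq => ?_
          rw [bitvec_cons_true_shift l r ((mem_internalPaths r q).mp hq)]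
        rw [e1, e2] at hh
        push_cast at hh ⊢
        linarith
      obtain ⟨hd2, hcr⟩ := ihr _ _ hright
      have hsum0 : ∑ q ∈ r.internalPaths, c (true :: q) = 0 :=
        Finset.sum_eq_zero hcr
      have hd : d = 0 := by rw [hsum0] at hd1; linarith
      refine ⟨hd, ?_⟩
      intro p hp
      rw [show (node l r).internalPaths = insert []
          ((internalPaths l).image (false :: ·) ∪ (internalPaths r).image (true :: ·)) from rfl] at hp
      simp only [Finset.mem_insert, Finset.mem_union, Finset.mem_image] at hp
      rcases hp with rfl | ⟨a, ha, rfl⟩ | ⟨a, ha, rfl⟩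
      · rw [hd] at hd2; linarith
      · exact hcl a ha
      · exact hcr a ha

end BTree

/-- The bitvectors of the internal nodes of a full binary tree, viewed as vectors
in `ℚ^L` (`L` = number of leaves), are linearly independent; i.e. the bitvector
matrix has full column rank over the rationals. -/
theorem stmt7 (t : BTree) :
    LinearIndependent ℚ (fun p : {p : List Bool // t.isInternal p} =>
      fun i : Fin t.numLeaves => (t.bitvec p.1 i : ℚ)) := by
  rw [linearIndependent_iff']
  intro s g hg x hx
  classical
  set c : List Bool → ℚ := fun p => ∑ y ∈ s.filter (fun y => y.1 = p), g y with hc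
  have hmaps : ∀ y ∈ s, (y : {p : List Bool // t.isInternal p}).1 ∈ t.internalPaths :=
    fun y _ => (BTree.mem_internalPaths t y.1).mpr y.2
  have hkey := BTree.key t c 0 ?_
  · have hfil : s.filter (fun y => y.1 = x.1) = {x} := by
      ext y
      simp only [Finset.mem_filter, Finset.mem_singleton]
      constructor
      · rintro ⟨hy, hxy⟩; exact Subtype.ext hxy
      · rintro rfl; exact ⟨hx, rfl⟩
    have : c x.1 = g x := by rw [hc]; simp [hfil]
    rw [← this]
    exact hkey.2 x.1 (hmaps x hx)
  · intro i hi
    have hgi := congrFun hg ⟨i, hi⟩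
    rw [Finset.sum_apply] at hgi
    simp only [Pi.smul_apply, smul_eq_mul, Pi.zero_apply] at hgi
    have : ∑ p ∈ t.internalPaths, c p * (t.bitvec p i : ℚ)
        = ∑ y ∈ s, g y * (t.bitvec y.1 i : ℚ) := by
      rw [← Finset.sum_fiberwise_of_maps_to hmaps (fun y => g y * (t.bitvec y.1 i : ℚ))]
      refine Finset.sum_congr rfl fun p _ => ?_
      rw [hc, Finset.sum_mul]
      refine Finset.sum_congr rfl fun y hy => ?_
      rw [(Finset.mem_filter.mp hy).2]
    rw [this, hgi, add_zero]
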